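/- arXiv:2008.10288 — 3 statements merged into one kernel-verified Lean document; each statement's English description precedes it below -/
import Mathlib

section
/- Right multiplications Rᵢ, Rⱼ and the composition K = Rⱼ∘Rᵢ (i.e., x ↦ (x·i)·j) on the octonions 𝕆 ≅ ℝ⁸ form a hypercomplex structure: Rᵢ² = Rⱼ² = K² = -Id, Rᵢ∘Rⱼ = -Rⱼ∘Rᵢ, and K = Rⱼ∘Rᵢ satisfies K∘Rᵢ = Rⱼ (the quaternion relations hold). -/
noncomputable section

open Quaternion

/-- The octonions, via the Cayley–Dickson construction on the quaternions:
`x = h₁ + h₂e ↔ (h₁, h₂)`. -/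
abbrev Oct := ℍ[ℝ] × ℍ[ℝ]

/-- Cayley–Dickson multiplication: `(h₁+h₂e)(h₁'+h₂'e) = (h₁h₁' - h̄₂'h₂) + (h₂h̄₁' + h₂'h₁)e`. -/
def omul (x y : Oct) : Oct :=
  (x.1 * y.1 - star y.2 * x.2, x.2 * star y.1 + y.2 * x.1)

/-- The imaginary units i, j of ℍ ⊂ 𝕆. -/
def oi : Oct := (⟨0,1,0,0⟩, 0)
def oj : Oct := (⟨0,0,1,0⟩, 0)

/-- Right multiplications by i and j on 𝕆. -/
def Ri (x : Oct) : Oct := omul x oi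
def Rj (x : Oct) : Oct := omul x oj
/-- `K(x) = (x·i)·j`, the composition `Rⱼ∘Rᵢ`. -/
def Kq (x : Oct) : Oct := Rj (Ri x)

/-- `(Rᵢ, Rⱼ, K = Rⱼ∘Rᵢ)` is a hypercomplex structure on 𝕆 ≅ ℝ⁸:
all three square to `-Id`, `Rᵢ` and `Rⱼ` anticommute, and the quaternion relation
`K ∘ Rᵢ = Rⱼ` holds (compositions read in diagrammatic order: `x ↦ Rᵢ(K x) = Rⱼ x`). -/
theorem octonion_right_mult_hypercomplex :
    (∀ x : Oct, Ri (Ri x) = -x) ∧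
    (∀ x : Oct, Rj (Rj x) = -x) ∧
    (∀ x : Oct, Kq (Kq x) = -x) ∧
    (∀ x : Oct, Ri (Rj x) = - Rj (Ri x)) ∧
    (∀ x : Oct, Ri (Kq x) = Rj x) := by
  have h2i : oi.2 = 0 := rfl
  have h2j : oj.2 = 0 := rfl
  have hI : oi.1 * oi.1 = -1 := by
    ext <;> simp only [Quaternion.re_mul, Quaternion.imI_mul, Quaternion.imJ_mul, Quaternion.imK_mul,
      Quaternion.re_neg, Quaternion.imI_neg, Quaternion.imJ_neg, Quaternion.imK_neg, Quaternion.re_one,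
      Quaternion.imI_one, Quaternion.imJ_one, Quaternion.imK_one] <;> simp only [oi] <;> norm_num
  have hJ : oj.1 * oj.1 = -1 := by
    ext <;> simp only [Quaternion.re_mul, Quaternion.imI_mul, Quaternion.imJ_mul, Quaternion.imK_mul,
      Quaternion.re_neg, Quaternion.imI_neg, Quaternion.imJ_neg, Quaternion.imK_neg, Quaternion.re_one,
      Quaternion.imI_one, Quaternion.imJ_one, Quaternion.imK_one] <;> simp only [oj] <;> norm_num
  have hJI : oj.1 * oi.1 = -(oi.1 * oj.1) := by
    ext <;> simp only [Quaternion.re_mul, Quaternion.imI_mul, Quaternion.imJ_mul, Quaternion.imK_mul,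
      Quaternion.re_neg, Quaternion.imI_neg, Quaternion.imJ_neg, Quaternion.imK_neg] <;>
      simp only [oi, oj] <;> norm_num
  have hsI : star oi.1 = -oi.1 := by
    ext <;> simp only [Quaternion.re_star, Quaternion.imI_star, Quaternion.imJ_star, Quaternion.imK_star,
      Quaternion.re_neg, Quaternion.imI_neg, Quaternion.imJ_neg, Quaternion.imK_neg] <;> simp only [oi] <;> norm_num
  have hsJ : star oj.1 = -oj.1 := by
    ext <;> simp only [Quaternion.re_star, Quaternion.imI_star, Quaternion.imJ_star, Quaternion.imK_star,
      Quaternion.re_neg, Quaternion.imI_neg, Quaternion.imJ_neg, Quaternion.imK_neg] <;> simp only [oj] <;> norm_num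
  have hI' : ∀ x : ℍ[ℝ], oi.1 * (oi.1 * x) = -x := by
    intro x; rw [← mul_assoc, hI, neg_one_mul]
  have hJ' : ∀ x : ℍ[ℝ], oj.1 * (oj.1 * x) = -x := by
    intro x; rw [← mul_assoc, hJ, neg_one_mul]
  have hJI' : ∀ x : ℍ[ℝ], oj.1 * (oi.1 * x) = -(oi.1 * (oj.1 * x)) := by
    intro x; rw [← mul_assoc, ← mul_assoc, hJI, neg_mul]
  refine ⟨?_, ?_, ?_, ?_, ?_⟩ <;>
    rintro ⟨p, q⟩ <;>
    simp only [Kq, Ri, Rj, omul, h2i, h2j, star_zero, zero_mul, sub_zero, add_zero, Prod.neg_mk,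
      Prod.mk.injEq, hsI, hsJ, neg_mul, mul_neg, neg_neg, mul_assoc, hI, hJ, hJI, hI', hJ', hJI',
      mul_one, and_self, neg_zero, mul_zero, and_true]
end
end

section
/- With the ten 2-forms θ_{αβ} on ℝ⁸ being the Kähler forms of the complex structures I_{αβ} = Iα∘Iβ built from the quaternionic Pauli Clifford system, the left quaternionic 4-form satisfies Ω_L = -(1/2) Σ_{1≤α<β≤5} θ_{αβ}². -/
set_option maxHeartbeats 4000000


noncomputable section

open Quaternion

/-- The exterior algebra of (the dual of) ℝ⁸; forms on ℝ⁸ ≅ ℍ². -/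
abbrev Ext8 := ExteriorAlgebra ℝ (Fin 8 → ℝ)

/-- The coordinate 1-forms (0-indexed). -/
def dx (a : Fin 8) : Ext8 := ExteriorAlgebra.ι ℝ (Pi.single a 1)

def qi : ℍ[ℝ] := ⟨0,1,0,0⟩
def qj : ℍ[ℝ] := ⟨0,0,1,0⟩
def qk : ℍ[ℝ] := ⟨0,0,0,1⟩

/-- The Euclidean inner product on ℍ² ≅ ℝ⁸. -/
def ipH2 (x y : ℍ[ℝ] × ℍ[ℝ]) : ℝ :=
  (x.1 * star y.1).re + (x.2 * star y.2).re

/-- The standard orthonormal basis `1, i, j, k, e, ie, je, ke` of ℍ² ≅ ℝ⁸. -/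
def qe : Fin 8 → ℍ[ℝ] × ℍ[ℝ]
  | 0 => (1, 0) | 1 => (qi, 0) | 2 => (qj, 0) | 3 => (qk, 0)
  | 4 => (0, 1) | 5 => (0, qi) | 6 => (0, qj) | 7 => (0, qk)

/-- The Kähler 2-form `ω(X,Y) = ⟨JX,Y⟩` of an endomorphism `J` of ℍ² ≅ ℝ⁸,
as an element of the exterior algebra: `ω = Σ_{a<b} ⟨J e_a, e_b⟩ dx_a ∧ dx_b`. -/
def kform (J : ℍ[ℝ] × ℍ[ℝ] → ℍ[ℝ] × ℍ[ℝ]) : Ext8 :=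
  (1/2 : ℝ) • ∑ a : Fin 8, ∑ b : Fin 8, ipH2 (J (qe a)) (qe b) • (dx a * dx b)

/-- The five (right) quaternionic Pauli matrices on ℍ² ≅ ℝ⁸. -/
def qPauli : Fin 5 → ℍ[ℝ] × ℍ[ℝ] → ℍ[ℝ] × ℍ[ℝ]
  | 0 => fun x => (x.2, x.1)
  | 1 => fun x => (-(x.2 * qi), x.1 * qi)
  | 2 => fun x => (-(x.2 * qj), x.1 * qj)
  | 3 => fun x => (-(x.2 * qk), x.1 * qk)
  | 4 => fun x => (x.1, -x.2)

/-- The Kähler form `θ_{αβ}` of the complex structure `I_{αβ} = Iα ∘ Iβ`. -/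
def θ (α β : Fin 5) : Ext8 := kform (fun x => qPauli α (qPauli β x))

/-- Left multiplications by i, j, k on ℍ². -/
def Li (x : ℍ[ℝ] × ℍ[ℝ]) : ℍ[ℝ] × ℍ[ℝ] := (qi * x.1, qi * x.2)
def Lj (x : ℍ[ℝ] × ℍ[ℝ]) : ℍ[ℝ] × ℍ[ℝ] := (qj * x.1, qj * x.2)
def Lk (x : ℍ[ℝ] × ℍ[ℝ]) : ℍ[ℝ] × ℍ[ℝ] := (qk * x.1, qk * x.2)

/-- The left quaternionic 4-form `Ω_L = ω_{L_i}² + ω_{L_j}² + ω_{L_k}²`. -/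
def ΩL : Ext8 := (kform Li)^2 + (kform Lj)^2 + (kform Lk)^2


set_option maxHeartbeats 4000000 in
lemma dx_sq (a : Fin 8) : dx a * dx a = 0 := ExteriorAlgebra.ι_sq_zero _
lemma dx_swap (a b : Fin 8) : dx b * dx a = -(dx a * dx b) := by
  have := ExteriorAlgebra.ι_add_mul_swap (R := ℝ) (Pi.single a (1:ℝ) : Fin 8 → ℝ) (Pi.single b 1)
  rw [dx, dx, eq_neg_iff_add_eq_zero, add_comm]; exact this
lemma sw1 (a b : Fin 8) (_h : b < a) : dx a * dx b = -(dx b * dx a) := dx_swap b a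
lemma sw2 (a b : Fin 8) (x : Ext8) (h : b < a) :
    dx a * (dx b * x) = -(dx b * (dx a * x)) := by
  rw [← mul_assoc, ← mul_assoc, sw1 a b h, neg_mul]
lemma sq2 (a : Fin 8) (x : Ext8) : dx a * (dx a * x) = 0 := by
  rw [← mul_assoc, dx_sq, zero_mul]

lemma qi_re : qi.re = 0 := rfl
lemma qi_imI : qi.imI = 1 := rfl
lemma qi_imJ : qi.imJ = 0 := rfl
lemma qi_imK : qi.imK = 0 := rfl
lemma qj_re : qj.re = 0 := rfl
lemma qj_imI : qj.imI = 0 := rfl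
lemma qj_imJ : qj.imJ = 1 := rfl
lemma qj_imK : qj.imK = 0 := rfl
lemma qk_re : qk.re = 0 := rfl
lemma qk_imI : qk.imI = 0 := rfl
lemma qk_imJ : qk.imJ = 0 := rfl
lemma qk_imK : qk.imK = 1 := rfl

lemma form_Li : kform Li = dx 0 * dx 1 + dx 2 * dx 3 + dx 4 * dx 5 + dx 6 * dx 7 := by
  rw [kform]
  simp only [Fin.sum_univ_eight]
  norm_num [Li, qe, ipH2, qi_re, qi_imI, qi_imJ, qi_imK, qj_re, qj_imI, qj_imJ, qj_imK, qk_re, qk_imI, qk_imJ, qk_imK, Quaternion.ext_iff, dx_sq]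
  rw [dx_swap 0 1, dx_swap 2 3, dx_swap 4 5, dx_swap 6 7]
  module

lemma form_Lj : kform Lj = dx 0 * dx 2 - dx 1 * dx 3 + dx 4 * dx 6 - dx 5 * dx 7 := by
  rw [kform]
  simp only [Fin.sum_univ_eight]
  norm_num [Lj, qe, ipH2, qi_re, qi_imI, qi_imJ, qi_imK, qj_re, qj_imI, qj_imJ, qj_imK, qk_re, qk_imI, qk_imJ, qk_imK, Quaternion.ext_iff, dx_sq]
  rw [dx_swap 0 2, dx_swap 1 3, dx_swap 4 6, dx_swap 5 7]
  module

lemma form_Lk : kform Lk = dx 0 * dx 3 + dx 1 * dx 2 + dx 4 * dx 7 + dx 5 * dx 6 := by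
  rw [kform]
  simp only [Fin.sum_univ_eight]
  norm_num [Lk, qe, ipH2, qi_re, qi_imI, qi_imJ, qi_imK, qj_re, qj_imI, qj_imJ, qj_imK, qk_re, qk_imI, qk_imJ, qk_imK, Quaternion.ext_iff, dx_sq]
  rw [dx_swap 0 3, dx_swap 1 2, dx_swap 4 7, dx_swap 5 6]
  module

lemma form_T01 : θ 0 1 = dx 0 * dx 1 - dx 2 * dx 3 - dx 4 * dx 5 + dx 6 * dx 7 := by
  rw [θ, kform]
  simp only [Fin.sum_univ_eight]
  norm_num [qPauli, qe, ipH2, qi_re, qi_imI, qi_imJ, qi_imK, qj_re, qj_imI, qj_imJ, qj_imK, qk_re, qk_imI, qk_imJ, qk_imK, Quaternion.ext_iff, dx_sq]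
  rw [dx_swap 0 1, dx_swap 2 3, dx_swap 4 5, dx_swap 6 7]
  module

lemma form_T02 : θ 0 2 = dx 0 * dx 2 + dx 1 * dx 3 - dx 4 * dx 6 - dx 5 * dx 7 := by
  rw [θ, kform]
  simp only [Fin.sum_univ_eight]
  norm_num [qPauli, qe, ipH2, qi_re, qi_imI, qi_imJ, qi_imK, qj_re, qj_imI, qj_imJ, qj_imK, qk_re, qk_imI, qk_imJ, qk_imK, Quaternion.ext_iff, dx_sq]
  rw [dx_swap 0 2, dx_swap 1 3, dx_swap 4 6, dx_swap 5 7]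
  module

lemma form_T03 : θ 0 3 = dx 0 * dx 3 - dx 1 * dx 2 - dx 4 * dx 7 + dx 5 * dx 6 := by
  rw [θ, kform]
  simp only [Fin.sum_univ_eight]
  norm_num [qPauli, qe, ipH2, qi_re, qi_imI, qi_imJ, qi_imK, qj_re, qj_imI, qj_imJ, qj_imK, qk_re, qk_imI, qk_imJ, qk_imK, Quaternion.ext_iff, dx_sq]
  rw [dx_swap 0 3, dx_swap 1 2, dx_swap 4 7, dx_swap 5 6]
  module

lemma form_T04 : θ 0 4 = dx 0 * dx 4 + dx 1 * dx 5 + dx 2 * dx 6 + dx 3 * dx 7 := by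
  rw [θ, kform]
  simp only [Fin.sum_univ_eight]
  norm_num [qPauli, qe, ipH2, qi_re, qi_imI, qi_imJ, qi_imK, qj_re, qj_imI, qj_imJ, qj_imK, qk_re, qk_imI, qk_imJ, qk_imK, Quaternion.ext_iff, dx_sq]
  rw [dx_swap 0 4, dx_swap 1 5, dx_swap 2 6, dx_swap 3 7]
  module

lemma form_T12 : θ 1 2 = dx 0 * dx 3 - dx 1 * dx 2 + dx 4 * dx 7 - dx 5 * dx 6 := by
  rw [θ, kform]
  simp only [Fin.sum_univ_eight]
  norm_num [qPauli, qe, ipH2, qi_re, qi_imI, qi_imJ, qi_imK, qj_re, qj_imI, qj_imJ, qj_imK, qk_re, qk_imI, qk_imJ, qk_imK, Quaternion.ext_iff, dx_sq]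
  rw [dx_swap 0 3, dx_swap 1 2, dx_swap 4 7, dx_swap 5 6]
  module

lemma form_T13 : θ 1 3 = - dx 0 * dx 2 - dx 1 * dx 3 - dx 4 * dx 6 - dx 5 * dx 7 := by
  rw [θ, kform]
  simp only [Fin.sum_univ_eight]
  norm_num [qPauli, qe, ipH2, qi_re, qi_imI, qi_imJ, qi_imK, qj_re, qj_imI, qj_imJ, qj_imK, qk_re, qk_imI, qk_imJ, qk_imK, Quaternion.ext_iff, dx_sq]
  rw [dx_swap 0 2, dx_swap 1 3, dx_swap 4 6, dx_swap 5 7]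
  module

lemma form_T14 : θ 1 4 = dx 0 * dx 5 - dx 1 * dx 4 - dx 2 * dx 7 + dx 3 * dx 6 := by
  rw [θ, kform]
  simp only [Fin.sum_univ_eight]
  norm_num [qPauli, qe, ipH2, qi_re, qi_imI, qi_imJ, qi_imK, qj_re, qj_imI, qj_imJ, qj_imK, qk_re, qk_imI, qk_imJ, qk_imK, Quaternion.ext_iff, dx_sq]
  rw [dx_swap 0 5, dx_swap 1 4, dx_swap 2 7, dx_swap 3 6]
  module

lemma form_T23 : θ 2 3 = dx 0 * dx 1 - dx 2 * dx 3 + dx 4 * dx 5 - dx 6 * dx 7 := by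
  rw [θ, kform]
  simp only [Fin.sum_univ_eight]
  norm_num [qPauli, qe, ipH2, qi_re, qi_imI, qi_imJ, qi_imK, qj_re, qj_imI, qj_imJ, qj_imK, qk_re, qk_imI, qk_imJ, qk_imK, Quaternion.ext_iff, dx_sq]
  rw [dx_swap 0 1, dx_swap 2 3, dx_swap 4 5, dx_swap 6 7]
  module

lemma form_T24 : θ 2 4 = dx 0 * dx 6 + dx 1 * dx 7 - dx 2 * dx 4 - dx 3 * dx 5 := by
  rw [θ, kform]
  simp only [Fin.sum_univ_eight]
  norm_num [qPauli, qe, ipH2, qi_re, qi_imI, qi_imJ, qi_imK, qj_re, qj_imI, qj_imJ, qj_imK, qk_re, qk_imI, qk_imJ, qk_imK, Quaternion.ext_iff, dx_sq]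
  rw [dx_swap 0 6, dx_swap 1 7, dx_swap 2 4, dx_swap 3 5]
  module

lemma form_T34 : θ 3 4 = dx 0 * dx 7 - dx 1 * dx 6 + dx 2 * dx 5 - dx 3 * dx 4 := by
  rw [θ, kform]
  simp only [Fin.sum_univ_eight]
  norm_num [qPauli, qe, ipH2, qi_re, qi_imI, qi_imJ, qi_imK, qj_re, qj_imI, qj_imJ, qj_imK, qk_re, qk_imI, qk_imJ, qk_imK, Quaternion.ext_iff, dx_sq]
  rw [dx_swap 0 7, dx_swap 1 6, dx_swap 2 5, dx_swap 3 4]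
  module


/-- `Ω_L = -(1/2) Σ_{1≤α<β≤5} θ_{αβ}²`. -/
theorem OmegaL_from_theta :
    ΩL = -(1/2 : ℝ) •
      (θ 0 1 ^ 2 + θ 0 2 ^ 2 + θ 0 3 ^ 2 + θ 0 4 ^ 2 + θ 1 2 ^ 2 + θ 1 3 ^ 2
       + θ 1 4 ^ 2 + θ 2 3 ^ 2 + θ 2 4 ^ 2 + θ 3 4 ^ 2) := by
  rw [ΩL, form_Li, form_Lj, form_Lk, form_T01, form_T02, form_T03, form_T04, form_T12,
    form_T13, form_T14, form_T23, form_T24, form_T34]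
  simp (config := { decide := true }) only [sq, sub_eq_add_neg, mul_add, add_mul, mul_assoc,
    sw1, sw2, dx_sq, sq2, mul_neg, neg_mul, mul_zero, zero_mul, neg_neg, add_zero, zero_add,
    neg_add_rev, smul_add, smul_neg]
  module
end
end

section
/- Any 4-plane Q ⊂ ℝ¹⁶ = 𝕆 ⊕ 𝕆' whose projections to both summands are 2-dimensional can be written in the canonical form Q = [e₁ ∧ (R_i e₁ cos θ + e₂ sin θ)] ⊕ [e₁' ∧ (R_i e₁' cos θ' + e₂' sin θ')] for suitable orthonormal pairs e₁,e₂ ∈ 𝕆 and e₁',e₂' ∈ 𝕆', a common complex structure R_i (right multiplication by a unit imaginary octonion), and angles 0 ≤ θ ≤ π/2, θ ≤ θ' ≤ π-θ. -/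
noncomputable section

open Quaternion

/-- The standard orthonormal basis `1,i,j,k,e,f,g,h` of 𝕆 ≅ ℝ⁸. -/
def oe : Fin 8 → Oct
  | 0 => (1, 0) | 1 => (qi, 0) | 2 => (qj, 0) | 3 => (qk, 0)
  | 4 => (0, 1) | 5 => (0, qi) | 6 => (0, qj) | 7 => (0, qk)

/-- The Euclidean inner product on 𝕆 ≅ ℝ⁸. -/
def ip8 (x y : Oct) : ℝ := (x.1 * star y.1).re + (x.2 * star y.2).re

/-- The Euclidean inner product on 𝕆² ≅ ℝ¹⁶. -/
def ip16 (x y : Oct × Oct) : ℝ := ip8 x.1 y.1 + ip8 x.2 y.2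

/-- The nine octonionic Pauli matrices on 𝕆² ≅ ℝ¹⁶:
`I₁ = [[0,Id],[Id,0]]`, `Iₐ = [[0,-R_u],[R_u,0]]` for `u = i,j,k,e,f,g,h` (a = 2,…,8),
`I₉ = [[Id,0],[0,-Id]]`, where `R_u` is right octonion multiplication by `u`. -/
def oPauli : Fin 9 → Oct × Oct → Oct × Oct
  | 0 => fun x => (x.2, x.1)
  | 1 => fun x => (-(omul x.2 (oe 1)), omul x.1 (oe 1))
  | 2 => fun x => (-(omul x.2 (oe 2)), omul x.1 (oe 2))
  | 3 => fun x => (-(omul x.2 (oe 3)), omul x.1 (oe 3))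
  | 4 => fun x => (-(omul x.2 (oe 4)), omul x.1 (oe 4))
  | 5 => fun x => (-(omul x.2 (oe 5)), omul x.1 (oe 5))
  | 6 => fun x => (-(omul x.2 (oe 6)), omul x.1 (oe 6))
  | 7 => fun x => (-(omul x.2 (oe 7)), omul x.1 (oe 7))
  | 8 => fun x => (x.1, -x.2)

open Real

/-! ### Auxiliary lemmas -/

/-- Octonion conjugation in Cayley–Dickson coordinates. -/
def ostar (x : Oct) : Oct := (star x.1, -x.2)

lemma ip8_comm' (x y : Oct) : ip8 x y = ip8 y x := by simp [ip8]; ring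
lemma ip8_smul_left' (a : ℝ) (x y : Oct) : ip8 (a • x) y = a * ip8 x y := by simp [ip8]; ring
lemma ip8_smul_right' (a : ℝ) (x y : Oct) : ip8 x (a • y) = a * ip8 x y := by simp [ip8]; ring
lemma ip8_sub_right' (x y z : Oct) : ip8 x (y - z) = ip8 x y - ip8 x z := by simp [ip8]; ring

lemma ip8_self' (x : Oct) : ip8 x x =
    x.1.re^2+x.1.imI^2+x.1.imJ^2+x.1.imK^2+x.2.re^2+x.2.imI^2+x.2.imJ^2+x.2.imK^2 := by
  simp [ip8]; ring

lemma ip8_self_nonneg' (x : Oct) : 0 ≤ ip8 x x := by rw [ip8_self']; positivity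

lemma ip8_self_eq_zero' {x : Oct} (h : ip8 x x = 0) : x = 0 := by
  rw [ip8_self'] at h
  have k : ∀ a : ℝ, a^2 ≤ 0 → a = 0 := fun a ha => by nlinarith [sq_nonneg a]
  have n1 := sq_nonneg x.1.re; have n2 := sq_nonneg x.1.imI
  have n3 := sq_nonneg x.1.imJ; have n4 := sq_nonneg x.1.imK
  have n5 := sq_nonneg x.2.re; have n6 := sq_nonneg x.2.imI
  have n7 := sq_nonneg x.2.imJ; have n8 := sq_nonneg x.2.imK
  rw [Prod.ext_iff]
  constructor <;> rw [Quaternion.ext_iff] <;>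
    exact ⟨k _ (by linarith), k _ (by linarith), k _ (by linarith), k _ (by linarith)⟩

lemma ip8_self_pos' {x : Oct} (h : x ≠ 0) : 0 < ip8 x x :=
  lt_of_le_of_ne (ip8_self_nonneg' x) (fun e => h (ip8_self_eq_zero' e.symm))

/-- Norm multiplicativity. -/
lemma ip8_omul_omul (x y : Oct) : ip8 (omul x y) (omul x y) = ip8 x x * ip8 y y := by
  simp [ip8, omul]; ring

lemma omul_ostar_cancel (x y : Oct) : omul x (omul (ostar x) y) = ip8 x x • y := by
  simp [ip8, omul, ostar, Quaternion.ext_iff, Prod.ext_iff]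
  and_intros <;> first | trivial | ring

lemma re_omul_ostar (x y : Oct) : (omul (ostar x) y).1.re = ip8 x y := by
  simp [ip8, omul, ostar]; ring

lemma ip8_omul_right (x u : Oct) : ip8 (omul x u) x = u.1.re * ip8 x x := by
  simp [ip8, omul]; ring

lemma ip8_ostar (x : Oct) : ip8 (ostar x) (ostar x) = ip8 x x := by
  simp [ip8, ostar] <;> ring

lemma ip8_expand (x y : Oct) (t : ℝ) :
    ip8 (x - t • y) (x - t • y) = ip8 x x - 2*t*ip8 x y + t^2 * ip8 y y := by
  simp [ip8]; ring

lemma ip8_qi : ip8 ((qi, 0) : Oct) ((qi, 0) : Oct) = 1 := by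
  simp only [ip8, Quaternion.re_mul, Quaternion.re_star, Quaternion.imI_star, Quaternion.imJ_star, Quaternion.imK_star]; simp [qi]
lemma re_qi : ((qi, 0) : Oct).1.re = 0 := by simp [qi]

/-- Unit-normalization. -/
lemma norm_unit' {x : Oct} (h : x ≠ 0) :
    ip8 ((Real.sqrt (ip8 x x))⁻¹ • x) ((Real.sqrt (ip8 x x))⁻¹ • x) = 1 := by
  have hp := ip8_self_pos' h
  rw [ip8_smul_left', ip8_smul_right', ← mul_assoc, ← mul_inv,
    Real.mul_self_sqrt hp.le, inv_mul_cancel₀ hp.ne']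

lemma exists_pair' {M : Type*} [AddCommGroup M] [Module ℝ M] [FiniteDimensional ℝ M]
    (K : Submodule ℝ M) (h : Module.finrank ℝ K = 2) :
    ∃ v w : M, v ∈ K ∧ w ∈ K ∧ v ≠ 0 ∧ (∀ c : ℝ, w ≠ c • v) ∧
      K = Submodule.span ℝ {v, w} := by
  have b := Module.finBasisOfFinrankEq ℝ K h
  refine ⟨b 0, b 1, (b 0).2, (b 1).2, ?_, ?_, ?_⟩
  · simpa using b.ne_zero 0
  · intro c hc
    have : (b 1 : K) = c • b 0 := Subtype.ext (by simpa using hc)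
    have h2 := congrArg (fun z => (b.repr z) 1) this
    simp [Finsupp.single_apply] at h2
  · apply le_antisymm
    · intro x hx
      have hs := b.sum_repr ⟨x, hx⟩
      rw [Fin.sum_univ_two] at hs
      have hx2 : x = b.repr ⟨x, hx⟩ 0 • (b 0 : M) + b.repr ⟨x, hx⟩ 1 • (b 1 : M) := by
        have := congrArg (Submodule.subtype K) hs
        simpa using this.symm
      rw [hx2]
      exact Submodule.add_mem _
        (Submodule.smul_mem _ _ (Submodule.subset_span (by simp)))
        (Submodule.smul_mem _ _ (Submodule.subset_span (by simp)))
    · rw [Submodule.span_le]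
      rintro x (rfl | rfl)
      · exact (b 0).2
      · exact (b 1).2

lemma gram' (v w : Oct) (hv : v ≠ 0) (hw : ∀ c : ℝ, w ≠ c • v) :
    ∃ f₁ f₂ : Oct, ip8 f₁ f₁ = 1 ∧ ip8 f₂ f₂ = 1 ∧ ip8 f₁ f₂ = 0 ∧
      Submodule.span ℝ {v, w} = Submodule.span ℝ {f₁, f₂} := by
  have ha := ip8_self_pos' hv
  set a := ip8 v v with hadef
  set c := ip8 v w / a with hcdef
  set w' := w - c • v with hw'def
  have hw' : w' ≠ 0 := by
    intro h0
    exact hw c (by rw [← sub_eq_zero]; exact h0)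
  have hb := ip8_self_pos' hw'
  set b := ip8 w' w' with hbdef
  have hvw' : ip8 v w' = 0 := by
    rw [hw'def, ip8_sub_right', ip8_smul_right', hcdef]
    field_simp
    rw [← hadef]; ring
  refine ⟨(Real.sqrt a)⁻¹ • v, (Real.sqrt b)⁻¹ • w', norm_unit' hv, norm_unit' hw', ?_, ?_⟩
  · rw [ip8_smul_left', ip8_smul_right', hvw']; ring
  · have hsa : Real.sqrt a ≠ 0 := (Real.sqrt_pos.mpr ha).ne'
    have hsb : Real.sqrt b ≠ 0 := (Real.sqrt_pos.mpr hb).ne'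
    apply le_antisymm
    · rw [Submodule.span_le]
      intro x hx
      simp only [Set.mem_insert_iff, Set.mem_singleton_iff] at hx
      rcases hx with h | h <;> rw [h]
      · have m1 : (Real.sqrt a)⁻¹ • v ∈ Submodule.span ℝ
            {(Real.sqrt a)⁻¹ • v, (Real.sqrt b)⁻¹ • w'} :=
          Submodule.subset_span (Set.mem_insert _ _)
        have m2 := Submodule.smul_mem _ (Real.sqrt a) m1
        rwa [smul_inv_smul₀ hsa] at m2
      · have m1 : (Real.sqrt b)⁻¹ • w' ∈ Submodule.span ℝ
            {(Real.sqrt a)⁻¹ • v, (Real.sqrt b)⁻¹ • w'} :=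
          Submodule.subset_span (by simp)
        have m2 : (Real.sqrt a)⁻¹ • v ∈ Submodule.span ℝ
            {(Real.sqrt a)⁻¹ • v, (Real.sqrt b)⁻¹ • w'} :=
          Submodule.subset_span (Set.mem_insert _ _)
        have m3 := Submodule.add_mem _ (Submodule.smul_mem _ (Real.sqrt b) m1)
          (Submodule.smul_mem _ (c * Real.sqrt a) m2)
        rw [smul_inv_smul₀ hsb, smul_smul, mul_assoc, mul_inv_cancel₀ hsa, mul_one] at m3
        have key : w' + c • v = w := by rw [hw'def]; abel
        rwa [key] at m3
    · rw [Submodule.span_le]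
      intro x hx
      simp only [Set.mem_insert_iff, Set.mem_singleton_iff] at hx
      rcases hx with h | h <;> rw [h]
      · exact Submodule.smul_mem _ _ (Submodule.subset_span (by simp))
      · rw [hw'def, smul_sub]
        exact Submodule.sub_mem _
          (Submodule.smul_mem _ _ (Submodule.subset_span (by simp)))
          ((Submodule.smul_mem _ _ (Submodule.smul_mem _ _ (Submodule.subset_span (by simp)))))


set_option maxHeartbeats 1600000 in
/-- Canonical form for 4-planes of ℝ¹⁶ = 𝕆 ⊕ 𝕆' with two-dimensional projections:
any such 4-plane `Q` is `[e₁ ∧ (R_u e₁ cos θ + e₂ sin θ)] ⊕ [e₁' ∧ (R_u e₁' cos θ' + e₂' sin θ')]`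
for suitable orthonormal pairs `e₁,e₂ ∈ 𝕆` and `e₁',e₂' ∈ 𝕆'`, a common complex structure `R_u`
(right multiplication by a unit imaginary octonion), and angles `0 ≤ θ ≤ π/2`, `θ ≤ θ' ≤ π-θ`. -/
theorem four_plane_canonical_form
    (Q : Submodule ℝ (Oct × Oct))
    (h4 : Module.finrank ℝ Q = 4)
    (hp1 : Module.finrank ℝ (Q.map (LinearMap.fst ℝ Oct Oct)) = 2)
    (hp2 : Module.finrank ℝ (Q.map (LinearMap.snd ℝ Oct Oct)) = 2) :
    ∃ (u e₁ e₂ e₁' e₂' : Oct) (θ θ' : ℝ),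
      u.1.re = 0 ∧ ip8 u u = 1 ∧
      ip8 e₁ e₁ = 1 ∧ ip8 e₂ e₂ = 1 ∧ ip8 e₁ e₂ = 0 ∧
      ip8 e₁' e₁' = 1 ∧ ip8 e₂' e₂' = 1 ∧ ip8 e₁' e₂' = 0 ∧
      0 ≤ θ ∧ θ ≤ π/2 ∧ θ ≤ θ' ∧ θ' ≤ π - θ ∧
      Q = Submodule.span ℝ
        {(e₁, 0), (Real.cos θ • omul e₁ u + Real.sin θ • e₂, 0),
         ((0 : Oct), e₁'), ((0 : Oct), Real.cos θ' • omul e₁' u + Real.sin θ' • e₂')} := by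
  classical
  -- the two "axis" subspaces of Q
  have hK₁ : Module.finrank ℝ ↥(Q ⊓ LinearMap.ker (LinearMap.snd ℝ Oct Oct)) = 2 := by
    have h := LinearMap.finrank_range_add_finrank_ker ((LinearMap.snd ℝ Oct Oct).comp Q.subtype)
    rw [LinearMap.range_comp, Submodule.range_subtype, LinearMap.ker_comp] at h
    rw [h4, hp2] at h
    have e := Submodule.finrank_map_subtype_eq Q
      (Submodule.comap Q.subtype (LinearMap.ker (LinearMap.snd ℝ Oct Oct)))
    rw [Submodule.map_comap_subtype] at e
    omega
  have hK₂ : Module.finrank ℝ ↥(Q ⊓ LinearMap.ker (LinearMap.fst ℝ Oct Oct)) = 2 := by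
    have h := LinearMap.finrank_range_add_finrank_ker ((LinearMap.fst ℝ Oct Oct).comp Q.subtype)
    rw [LinearMap.range_comp, Submodule.range_subtype, LinearMap.ker_comp] at h
    rw [h4, hp1] at h
    have e := Submodule.finrank_map_subtype_eq Q
      (Submodule.comap Q.subtype (LinearMap.ker (LinearMap.fst ℝ Oct Oct)))
    rw [Submodule.map_comap_subtype] at e
    omega
  have hdisj : (Q ⊓ LinearMap.ker (LinearMap.snd ℝ Oct Oct))
      ⊓ (Q ⊓ LinearMap.ker (LinearMap.fst ℝ Oct Oct)) = ⊥ := by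
    rw [eq_bot_iff]
    rintro x hx
    obtain ⟨⟨-, h2⟩, ⟨-, h1⟩⟩ := hx
    exact (Submodule.mem_bot ℝ).mpr (Prod.ext h1 h2)
  have hQ : (Q ⊓ LinearMap.ker (LinearMap.snd ℝ Oct Oct))
      ⊔ (Q ⊓ LinearMap.ker (LinearMap.fst ℝ Oct Oct)) = Q := by
    apply Submodule.eq_of_le_of_finrank_eq (sup_le inf_le_left inf_le_left)
    have hs := Submodule.finrank_sup_add_finrank_inf_eq
      (Q ⊓ LinearMap.ker (LinearMap.snd ℝ Oct Oct))
      (Q ⊓ LinearMap.ker (LinearMap.fst ℝ Oct Oct))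
    rw [hdisj, finrank_bot] at hs
    omega
  set K₁ := Q ⊓ LinearMap.ker (LinearMap.snd ℝ Oct Oct) with hK₁def
  set K₂ := Q ⊓ LinearMap.ker (LinearMap.fst ℝ Oct Oct) with hK₂def
  -- orthonormal pairs for each factor
  obtain ⟨v, w, hvK, hwK, hv0, hvw, hK₁span⟩ := exists_pair' K₁ hK₁
  obtain ⟨v', w', hvK', hwK', hv0', hvw', hK₂span⟩ := exists_pair' K₂ hK₂
  have hv2 : v.2 = 0 := hvK.2
  have hw2 : w.2 = 0 := hwK.2
  have hv1' : v'.1 = 0 := hvK'.2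
  have hw1' : w'.1 = 0 := hwK'.2
  have hv1ne : v.1 ≠ 0 := fun h => hv0 (Prod.ext h hv2)
  have hw1ind : ∀ c : ℝ, w.1 ≠ c • v.1 := by
    intro c hc
    exact hvw c (Prod.ext hc (by simp [hw2, hv2]))
  have hv2ne : v'.2 ≠ 0 := fun h => hv0' (Prod.ext hv1' h)
  have hw2ind : ∀ c : ℝ, w'.2 ≠ c • v'.2 := by
    intro c hc
    exact hvw' c (Prod.ext (by simp [hw1', hv1']) hc)
  obtain ⟨f₁, f₂, hf₁, hf₂, hf₁₂, hspan1⟩ := gram' v.1 w.1 hv1ne hw1ind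
  obtain ⟨g₁, g₂, hg₁, hg₂, hg₁₂, hspan2⟩ := gram' v'.2 w'.2 hv2ne hw2ind
  -- the common unit imaginary octonion
  set u := omul (ostar f₁) f₂ with hudef
  have hure : u.1.re = 0 := by rw [hudef, re_omul_ostar, hf₁₂]
  have huu : ip8 u u = 1 := by
    rw [hudef, ip8_omul_omul, ip8_ostar, hf₁, hf₂, one_mul]
  have hf₁u : omul f₁ u = f₂ := by rw [hudef, omul_ostar_cancel, hf₁, one_smul]
  -- second factor data
  set g := omul g₁ u with hgdef
  have hgg : ip8 g g = 1 := by rw [hgdef, ip8_omul_omul, hg₁, huu, one_mul]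
  have hg₁g : ip8 g g₁ = 0 := by rw [hgdef, ip8_omul_right, hure, hg₁]; ring
  set c := ip8 g₂ g with hcdef
  have hexpand : ip8 (g₂ - c • g) (g₂ - c • g) = 1 - c^2 := by
    rw [ip8_expand, hg₂, hgg, hcdef]; ring
  have hc2 : c^2 ≤ 1 := by
    have := ip8_self_nonneg' (g₂ - c • g)
    rw [hexpand] at this; linarith
  have hc1 : -1 ≤ c := by nlinarith
  have hc1' : c ≤ 1 := by nlinarith
  -- the second unit vector e₂' and the value of the canonical combination
  have key2 : ∃ e₂' : Oct, ip8 e₂' e₂' = 1 ∧ ip8 g₁ e₂' = 0 ∧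
      c • g + Real.sqrt (1 - c^2) • e₂' = g₂ := by
    by_cases hd : g₂ - c • g = 0
    · have hc2' : 1 - c^2 = 0 := by rw [← hexpand, hd]; simp [ip8]
      refine ⟨omul g₁ ((qi, 0) : Oct), ?_, ?_, ?_⟩
      · rw [ip8_omul_omul, hg₁, ip8_qi, one_mul]
      · rw [ip8_comm', ip8_omul_right, re_qi, hg₁]; ring
      · rw [hc2', Real.sqrt_zero, zero_smul, add_zero]
        exact (sub_eq_zero.mp hd).symm
    · have hdp : 0 < ip8 (g₂ - c • g) (g₂ - c • g) := ip8_self_pos' hd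
      have hpos : 0 < 1 - c^2 := by rwa [hexpand] at hdp
      have hs : Real.sqrt (1 - c^2) ≠ 0 := (Real.sqrt_pos.mpr hpos).ne'
      refine ⟨(Real.sqrt (1 - c^2))⁻¹ • (g₂ - c • g), ?_, ?_, ?_⟩
      · have := norm_unit' hd
        rwa [hexpand] at this
      · rw [ip8_smul_right', ip8_sub_right', ip8_smul_right', hg₁₂, ip8_comm' g₁ g, hg₁g]
        ring
      · rw [smul_inv_smul₀ hs]; abel
  obtain ⟨e₂', he₂'n, he₂'o, he₂'c⟩ := key2
  -- the first factor unit vector e₂ (orthogonal filler, unused in the span)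
  have he₂n : ip8 (omul f₁ ((qi,0) : Oct)) (omul f₁ ((qi,0) : Oct)) = 1 := by
    rw [ip8_omul_omul, hf₁, ip8_qi, one_mul]
  have he₂o : ip8 f₁ (omul f₁ ((qi,0) : Oct)) = 0 := by
    rw [ip8_comm', ip8_omul_right, re_qi, hf₁]; ring
  refine ⟨u, f₁, omul f₁ ((qi,0) : Oct), g₁, e₂', 0, Real.arccos c,
    hure, huu, hf₁, he₂n, he₂o, hg₁, he₂'n, he₂'o,
    le_refl 0, by positivity, Real.arccos_nonneg c, by simpa using Real.arccos_le_pi c, ?_⟩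
  -- the span identity
  have hX : Real.cos 0 • omul f₁ u + Real.sin 0 • (omul f₁ ((qi,0) : Oct)) = f₂ := by
    rw [Real.cos_zero, Real.sin_zero, one_smul, zero_smul, add_zero, hf₁u]
  have hY : Real.cos (Real.arccos c) • omul g₁ u + Real.sin (Real.arccos c) • e₂' = g₂ := by
    rw [Real.cos_arccos hc1 hc1', Real.sin_arccos, ← hgdef, he₂'c]
  rw [hX, hY]
  -- rewrite K₁ and K₂ as spans of explicit pairs
  have hvv : v = ((v.1, 0) : Oct × Oct) := Prod.ext rfl hv2
  have hww : w = ((w.1, 0) : Oct × Oct) := Prod.ext rfl hw2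
  have hvv' : v' = ((0, v'.2) : Oct × Oct) := Prod.ext hv1' rfl
  have hww' : w' = ((0, w'.2) : Oct × Oct) := Prod.ext hw1' rfl
  have hK₁eq : K₁ = Submodule.span ℝ {((f₁, 0) : Oct × Oct), (f₂, 0)} := by
    rw [hK₁span, hvv, hww]
    have h1 : ({((v.1, 0) : Oct × Oct), (w.1, 0)} : Set (Oct × Oct))
        = (LinearMap.inl ℝ Oct Oct) '' {v.1, w.1} := by
      simp [Set.image_insert_eq]
    have h2 : ({((f₁, 0) : Oct × Oct), (f₂, 0)} : Set (Oct × Oct))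
        = (LinearMap.inl ℝ Oct Oct) '' {f₁, f₂} := by
      simp [Set.image_insert_eq]
    rw [h1, h2, ← Submodule.map_span, ← Submodule.map_span, hspan1]
  have hK₂eq : K₂ = Submodule.span ℝ {((0, g₁) : Oct × Oct), (0, g₂)} := by
    rw [hK₂span, hvv', hww']
    have h1 : ({((0, v'.2) : Oct × Oct), (0, w'.2)} : Set (Oct × Oct))
        = (LinearMap.inr ℝ Oct Oct) '' {v'.2, w'.2} := by
      simp [Set.image_insert_eq]
    have h2 : ({((0, g₁) : Oct × Oct), (0, g₂)} : Set (Oct × Oct))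
        = (LinearMap.inr ℝ Oct Oct) '' {g₁, g₂} := by
      simp [Set.image_insert_eq]
    rw [h1, h2, ← Submodule.map_span, ← Submodule.map_span, hspan2]
  rw [← hQ, hK₁eq, hK₂eq, ← Submodule.span_union]
  congr 1
  ext x
  simp only [Set.mem_union, Set.mem_insert_iff, Set.mem_singleton_iff]
  tauto
end
end
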